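/- Characterization of projection onto the epigraph of the ℓ_1 norm: for (x, ξ) ∈ ℝ^N × ℝ with ‖x‖_1 > ξ, the Euclidean projection of (x, ξ) onto epi_{‖·‖_1} = {(v, η) : ‖v‖_1 ≤ η} equals (T_{λ*}(x), ξ + λ*), where T_λ is soft-thresholding and λ* is a positive root of the non-increasing function φ(λ) = ‖T_λ(x)‖_1 - λ - ξ. -/
import Mathlib


open Finset

/-- The `ℓ_1` norm on `Fin N → ℝ`. -/
def l1norm {N : ℕ} (x : Fin N → ℝ) : ℝ := ∑ n, |x n|

/-- The soft-thresholding operator `[T_λ(x)]_n = sign(x_n)·max{|x_n| - λ, 0}`. -/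
noncomputable def softThresh {N : ℕ} (lam : ℝ) (x : Fin N → ℝ) : Fin N → ℝ :=
  fun n => Real.sign (x n) * max (|x n| - lam) 0

/-- Squared Euclidean distance on `ℝ^N × ℝ`. -/
def distSq {N : ℕ} (p q : (Fin N → ℝ) × ℝ) : ℝ :=
  (∑ n, (p.1 n - q.1 n) ^ 2) + (p.2 - q.2) ^ 2

lemma softThresh_key (lam : ℝ) (hl : 0 < lam) (a : ℝ) :
    |a - Real.sign a * max (|a| - lam) 0| ≤ lam ∧
    (a - Real.sign a * max (|a| - lam) 0) * (Real.sign a * max (|a| - lam) 0)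
      = lam * |Real.sign a * max (|a| - lam) 0| := by
  rcases le_or_gt (|a|) lam with h | h
  · have hmax : max (|a| - lam) 0 = 0 := max_eq_right (by linarith)
    simp [hmax, h]
  · have hmax : max (|a| - lam) 0 = |a| - lam := max_eq_left (by linarith)
    rw [hmax]
    rcases lt_trichotomy a 0 with h' | h' | h'
    · have hs : Real.sign a = -1 := Real.sign_of_neg h'
      have he : |a| = -a := abs_of_neg h'
      rw [hs, he]
      constructor
      · rw [abs_le]; constructor <;> nlinarith
      · rw [abs_of_nonpos (by nlinarith : -1 * (-a - lam) ≤ 0)]; ring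
    · exfalso; rw [h'] at h; simp at h; linarith
    · have hs : Real.sign a = 1 := Real.sign_of_pos h'
      have he : |a| = a := abs_of_pos h'
      rw [hs, he]
      constructor
      · rw [abs_le]; constructor <;> nlinarith
      · rw [abs_of_nonneg (by nlinarith)]; ring

theorem projection_epigraph_l1
    {N : ℕ} (x : Fin N → ℝ) (ξ : ℝ) (hxξ : ξ < l1norm x)
    (lam : ℝ) (hlam_pos : 0 < lam)
    (hroot : l1norm (softThresh lam x) - lam - ξ = 0) :
    let C : Set ((Fin N → ℝ) × ℝ) := {p | l1norm p.1 ≤ p.2}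
    let pr : (Fin N → ℝ) × ℝ := (softThresh lam x, ξ + lam)
    pr ∈ C ∧ ∀ q ∈ C, distSq (x, ξ) pr ≤ distSq (x, ξ) q := by
  intro C pr
  set p : Fin N → ℝ := softThresh lam x with hp
  have hpl1 : l1norm p = lam + ξ := by linarith
  constructor
  · show l1norm p ≤ ξ + lam
    linarith
  · rintro ⟨v, η⟩ hq
    have hq' : l1norm v ≤ η := hq
    have hkey : ∀ n, |x n - p n| ≤ lam ∧ (x n - p n) * p n = lam * |p n| :=
      fun n => softThresh_key lam hlam_pos (x n)
    -- ∑ r p = lam * (lam + ξ)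
    have hrp : ∑ n, (x n - p n) * p n = lam * (lam + ξ) := by
      have : ∑ n, (x n - p n) * p n = ∑ n, lam * |p n| := by
        apply Finset.sum_congr rfl
        intro n _; exact (hkey n).2
      rw [this, ← Finset.mul_sum]
      have : ∑ n, |p n| = l1norm p := rfl
      rw [this, hpl1]
    -- ∑ r v ≤ lam * η
    have hrv : ∑ n, (x n - p n) * v n ≤ lam * η := by
      have h1 : ∑ n, (x n - p n) * v n ≤ ∑ n, lam * |v n| := by
        apply Finset.sum_le_sum
        intro n _
        calc (x n - p n) * v n ≤ |(x n - p n) * v n| := le_abs_self _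
          _ = |x n - p n| * |v n| := abs_mul _ _
          _ ≤ lam * |v n| := mul_le_mul_of_nonneg_right (hkey n).1 (abs_nonneg _)
      rw [← Finset.mul_sum] at h1
      have h2 : ∑ n, |v n| = l1norm v := rfl
      rw [h2] at h1
      exact h1.trans (mul_le_mul_of_nonneg_left hq' hlam_pos.le)
    -- expansion identity
    have hexp : ∑ n, (x n - v n) ^ 2
        = ∑ n, (x n - p n) ^ 2 + ∑ n, (p n - v n) ^ 2
          + 2 * (∑ n, (x n - p n) * p n - ∑ n, (x n - p n) * v n) := by
      rw [← Finset.sum_sub_distrib, Finset.mul_sum, ← Finset.sum_add_distrib,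
        ← Finset.sum_add_distrib]
      apply Finset.sum_congr rfl
      intro n _; ring
    have hsq : (0:ℝ) ≤ ∑ n, (p n - v n) ^ 2 :=
      Finset.sum_nonneg fun n _ => sq_nonneg _
    show (∑ n, (x n - p n) ^ 2) + (ξ - (ξ + lam)) ^ 2
        ≤ (∑ n, (x n - v n) ^ 2) + (ξ - η) ^ 2
    nlinarith [sq_nonneg (ξ + lam - η)]
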